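/- Let 𝒜 be a Grothendieck abelian category in which every nonzero object admits a simple subobject. If G is an object of 𝒜 such that every short exact sequence 0 → G → E → S → 0 with S simple splits, then G is an injective object of 𝒜. -/

import Mathlib

open CategoryTheory Limits

universe v u

namespace Statement15Aux
variable {A : Type u} [Category.{v} A] [Abelian A]

structure PExt (G : A) {X Y : A} (i : X ⟶ Y) [Mono i] (f : X ⟶ G) where
  Z : Subobject Y
  g : (Z : A) ⟶ G
  le : Subobject.mk i ≤ Z
  comm : Subobject.ofMkLE i Z le ≫ g = f

variable {G X Y : A} {i : X ⟶ Y} [Mono i] {f : X ⟶ G}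

instance : Preorder (PExt G i f) where
  le p q := ∃ h : p.Z ≤ q.Z, Subobject.ofLE _ _ h ≫ q.g = p.g
  le_refl p := ⟨le_rfl, by simp [Subobject.ofLE_refl]⟩
  le_trans p q r := by
    rintro ⟨h1, e1⟩ ⟨h2, e2⟩
    refine ⟨h1.trans h2, ?_⟩
    rw [← Subobject.ofLE_comp_ofLE _ _ _ h1 h2, Category.assoc, e2, e1]

instance : Nonempty (PExt G i f) := by
  refine ⟨⟨Subobject.mk i, (Subobject.underlyingIso i).hom ≫ f, le_rfl, ?_⟩⟩
  have h : Subobject.ofMkLE i (Subobject.mk i) le_rfl = (Subobject.underlyingIso i).inv := by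
    rw [← cancel_mono (Subobject.mk i).arrow]
    simp
  rw [h]; simp

lemma chain_bound [HasColimits A] [AB5 A] [WellPowered.{v} A]
    (c : Set (PExt G i f)) (hc : IsChain (· ≤ ·) c) (hne : c.Nonempty) :
    BddAbove c := by
  have hsmall : Small.{v} (PExt G i f) := by
    haveI : Small.{v} (Subobject Y) := WellPowered.subobject_small Y
    apply small_of_injective
      (f := fun p => (⟨p.Z, p.g⟩ : Σ Z : Subobject Y, ((Z : A) ⟶ G)))
    rintro ⟨Z₁, g₁, _, _⟩ ⟨Z₂, g₂, _, _⟩ h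
    obtain rfl : Z₁ = Z₂ := congrArg (fun x => x.1) h
    injection h with h1 h2
    obtain rfl : g₁ = g₂ := h2
    rfl
  set J := Shrink.{v} ↥c with hJ
  let e : J ≃ ↥c := (equivShrink ↥c).symm
  letI : Preorder J := Preorder.lift (fun j => (e j).1)
  letI : SmallCategory J := Preorder.smallCategory J
  haveI : Nonempty J := ⟨(equivShrink _) ⟨hne.choose, hne.choose_spec⟩⟩
  haveI : IsDirected J (· ≤ ·) := by
    constructor
    intro j k
    rcases eq_or_ne (e j).1 (e k).1 with h | h
    · exact ⟨k, (le_of_eq h : (e j).1 ≤ (e k).1), (le_refl (e k).1 : (e k).1 ≤ (e k).1)⟩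
    · rcases hc (e j).2 (e k).2 h with h' | h'
      · exact ⟨k, (h' : (e j).1 ≤ (e k).1), (le_refl (e k).1 : (e k).1 ≤ (e k).1)⟩
      · exact ⟨j, (le_refl (e j).1 : (e j).1 ≤ (e j).1), (h' : (e k).1 ≤ (e j).1)⟩
  -- the diagram of subobjects
  have hZ : ∀ {j k : J}, j ≤ k → (e j).1.Z ≤ (e k).1.Z := fun h => h.choose
  have hg : ∀ {j k : J} (h : j ≤ k),
      Subobject.ofLE _ _ (hZ h) ≫ (e k).1.g = (e j).1.g := fun h => h.choose_spec
  let F : J ⥤ A :=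
    { obj := fun j => ((e j).1.Z : A)
      map := fun {j k} h => Subobject.ofLE _ _ (hZ (leOfHom h))
      map_id := fun j => Subobject.ofLE_refl _
      map_comp := fun {j k l} h h' =>
        (Subobject.ofLE_comp_ofLE _ _ _ (hZ (leOfHom h)) (hZ (leOfHom h'))).symm }
  let cY : Cocone F :=
    { pt := Y
      ι := { app := fun j => (e j).1.Z.arrow
             naturality := fun j k h => by simp [F] } }
  let cG : Cocone F :=
    { pt := G
      ι := { app := fun j => (e j).1.g
             naturality := fun j k h => by
               simpa [F] using hg (leOfHom h) } }
  let t : colimit F ⟶ Y := colimit.desc F cY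
  -- t is a mono
  haveI : Mono t := by
    haveI : Mono cY.ι := NatTrans.mono_of_mono_app _
    let cc : Cocone ((Functor.const J).obj Y) :=
      { pt := Y, ι := { app := fun _ => 𝟙 Y } }
    have hconst : ∀ (s : Cocone ((Functor.const J).obj Y)) (j k : J), j ≤ k →
        s.ι.app j = s.ι.app k := by
      intro s j k h
      simpa using (s.ι.naturality (homOfLE h)).symm
    have hcc : IsColimit cc :=
      { desc := fun s => s.ι.app (Classical.arbitrary J)
        fac := fun s j => by
          obtain ⟨k, h1, h2⟩ := directed_of (· ≤ ·) j (Classical.arbitrary J)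
          simp [cc, hconst s j k h1, hconst s _ k h2]
        uniq := fun s m hm => by
          simpa [cc] using hm (Classical.arbitrary J) }
    have ht : t = colim.map cY.ι ≫ (colimit.isoColimitCocone ⟨cc, hcc⟩).hom := by
      apply colimit.hom_ext
      intro j
      simp [t, cc, cY]
    rw [ht]
    infer_instance
  -- upper bound data
  have hleJ : ∀ j : J, (e j).1.Z ≤ Subobject.mk t :=
    fun j => Subobject.le_mk_of_comm (colimit.ι F j) (by simp [t, cY])
  have hkey : ∀ j : J,
      Subobject.ofLE _ _ (hleJ j) ≫ (Subobject.underlyingIso t).hom = colimit.ι F j := by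
    intro j
    rw [← cancel_mono t]
    simp [t, cY]
  have hcompJ : ∀ j : J,
      Subobject.ofLE _ _ (hleJ j) ≫
        ((Subobject.underlyingIso t).hom ≫ colimit.desc F cG) = (e j).1.g := by
    intro j
    rw [← Category.assoc, hkey j]
    simp [cG]
  obtain ⟨p₀, hp₀⟩ := hne
  let j₀ : J := (equivShrink ↥c) ⟨p₀, hp₀⟩
  have hej₀ : (e j₀).1 = p₀ := by simp [e, j₀]
  have hble : Subobject.mk i ≤ Subobject.mk t := (e j₀).1.le.trans (hleJ j₀)
  refine ⟨⟨Subobject.mk t, (Subobject.underlyingIso t).hom ≫ colimit.desc F cG, hble, ?_⟩, ?_⟩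
  · have h1 : Subobject.ofMkLE i (Subobject.mk t) hble =
        Subobject.ofMkLE i (e j₀).1.Z (e j₀).1.le ≫ Subobject.ofLE _ _ (hleJ j₀) := by
      rw [Subobject.ofMkLE_comp_ofLE]
    rw [h1, Category.assoc, hcompJ j₀, (e j₀).1.comm]
  · rintro p hp
    let j : J := (equivShrink ↥c) ⟨p, hp⟩
    have hej : (e j).1 = p := by simp [e, j]
    rw [← hej]
    exact ⟨hleJ j, hcompJ j⟩

end Statement15Aux


/-- Let `𝒜` be a Grothendieck abelian category (abelian, cocomplete, with
exact filtered colimits (AB5) and a separator) in which every nonzero object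
admits a simple subobject. If `G` is an object such that every short exact
sequence `0 → G → E → S → 0` with `S` simple splits, then `G` is injective. -/
theorem statement15 {A : Type u} [Category.{v} A] [Abelian A]
    [HasColimits A] [AB5 A] [HasSeparator A]
    (hsimple : ∀ X : A, ¬ IsZero X → ∃ (S : A) (f : S ⟶ X), Simple S ∧ Mono f)
    (G : A)
    (hsplit : ∀ (E S : A) (f : G ⟶ E) (g : E ⟶ S) (w : f ≫ g = 0),
      Mono f → Epi g → (ShortComplex.mk f g w).Exact → Simple S →
      ∃ r : E ⟶ G, f ≫ r = 𝟙 G) :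
    Injective G := by
  constructor
  intro X Y f i hi
  -- Zorn's lemma on partial extensions
  obtain ⟨m, hm⟩ := zorn_le_nonempty
    (α := Statement15Aux.PExt G i f) (fun c hc hne => Statement15Aux.chain_bound c hc hne)
  -- the maximal extension is total
  by_cases hiso : IsIso m.Z.arrow
  · refine ⟨inv m.Z.arrow ≫ m.g, ?_⟩
    have hi' : i ≫ inv m.Z.arrow = Subobject.ofMkLE i m.Z m.le := by
      rw [← cancel_mono m.Z.arrow, Category.assoc, IsIso.inv_hom_id, Category.comp_id,
        Subobject.ofMkLE_arrow]
    rw [← Category.assoc, hi', m.comm]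
  · exfalso
    -- the quotient Y/Z is nonzero
    set q : Y ⟶ cokernel m.Z.arrow := cokernel.π m.Z.arrow with hq
    have hQ : ¬ IsZero (cokernel m.Z.arrow) := by
      intro h
      haveI : Epi m.Z.arrow := Abelian.epi_of_cokernel_π_eq_zero _ (h.eq_of_tgt _ _)
      exact hiso (isIso_of_mono_of_epi _)
    obtain ⟨S, s, hS, hs⟩ := hsimple _ hQ
    haveI := hS
    haveI := hs
    -- pull back the simple subobject
    set E := pullback q s with hE
    set u : (m.Z : A) ⟶ E := pullback.lift m.Z.arrow 0 (by simp [hq, cokernel.condition])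
      with hu
    haveI : Mono u := by
      have : u ≫ pullback.fst q s = m.Z.arrow := by
        rw [hu]
        exact pullback.lift_fst _ _ _
      exact mono_of_mono_fac this
    -- the short complex Z → E → S is exact
    have w1 : u ≫ pullback.snd q s = 0 := by simp [hu, pullback.lift_fst, pullback.lift_snd, pullback.lift_fst_assoc, pullback.lift_snd_assoc]
    set sc1 : ShortComplex A := ShortComplex.mk u (pullback.snd q s) w1 with hsc1
    have hsc1ex : sc1.Exact := by
      apply ShortComplex.exact_of_f_is_kernel
      apply KernelFork.IsLimit.ofι
        (lift := fun {T} k hk => Abelian.monoLift m.Z.arrow (k ≫ pullback.fst q s)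
          (by rw [Category.assoc, pullback.condition, ← Category.assoc, hk, zero_comp]))
      · intro T k hk
        apply pullback.hom_ext
        · simp [hu, sc1, pullback.lift_fst, pullback.lift_snd, pullback.lift_fst_assoc, pullback.lift_snd_assoc]
        · simp [hu, sc1, (hk : k ≫ pullback.snd q s = 0), pullback.lift_fst, pullback.lift_snd, pullback.lift_fst_assoc, pullback.lift_snd_assoc]
      · intro T k hk l hl
        rw [← cancel_mono u, hl]
        apply pullback.hom_ext
        · simp [hu, pullback.lift_fst, pullback.lift_snd, pullback.lift_fst_assoc, pullback.lift_snd_assoc]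
        · simp [hu, sc1, (hk : k ≫ pullback.snd q s = 0), pullback.lift_fst, pullback.lift_snd, pullback.lift_fst_assoc, pullback.lift_snd_assoc]
    haveI : Epi sc1.g := by
      show Epi (pullback.snd q s)
      infer_instance
    -- push out along m.g
    set P := pushout m.g u with hP
    set π : P ⟶ S := pushout.desc 0 (pullback.snd q s) (by simp [w1]) with hπ
    have winl : pushout.inl m.g u ≫ π = 0 := by simp [hπ, pushout.inl_desc, pushout.inr_desc, pushout.inl_desc_assoc, pushout.inr_desc_assoc]
    haveI : Epi π := by
      have : pushout.inr m.g u ≫ π = pullback.snd q s := by simp [hπ, pushout.inl_desc, pushout.inr_desc, pushout.inl_desc_assoc, pushout.inr_desc_assoc]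
      exact epi_of_epi_fac this
    have hfac : ∀ {T : A} (v : P ⟶ T) (hv : pushout.inl m.g u ≫ v = 0),
        π ≫ hsc1ex.desc (pushout.inr m.g u ≫ v)
          (by rw [← Category.assoc]
              show (u ≫ pushout.inr m.g u) ≫ v = 0
              rw [← pushout.condition, Category.assoc, hv, comp_zero]) = v := by
      intro T v hv
      apply pushout.hom_ext
      · rw [← Category.assoc, winl, zero_comp, hv]
      · rw [← Category.assoc]
        show (pushout.inr m.g u ≫ π) ≫ _ = _
        have : pushout.inr m.g u ≫ π = pullback.snd q s := by simp [hπ, pushout.inl_desc, pushout.inr_desc, pushout.inl_desc_assoc, pushout.inr_desc_assoc]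
        rw [this]
        exact hsc1ex.g_desc _ _
    have hcoker2 : IsColimit (CokernelCofork.ofπ π winl) := by
      apply CokernelCofork.IsColimit.ofπ
        (desc := fun {T} v hv => hsc1ex.desc (pushout.inr m.g u ≫ v)
          (by rw [← Category.assoc]
              show (u ≫ pushout.inr m.g u) ≫ v = 0
              rw [← pushout.condition, Category.assoc, hv, comp_zero]))
      · intro T v hv
        exact hfac v hv
      · intro T v hv l hl
        rw [← cancel_epi π, hl, hfac v hv]
    -- the short complex G → P → S is exact, so it splits
    set sc2 : ShortComplex A := ShortComplex.mk (pushout.inl m.g u) π winl with hsc2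
    have hsc2ex : sc2.Exact := ShortComplex.exact_of_g_is_cokernel _ hcoker2
    obtain ⟨r, hr⟩ := hsplit P S (pushout.inl m.g u) π winl inferInstance inferInstance hsc2ex hS
    -- build a strictly bigger partial extension
    have hle : m.Z ≤ Subobject.mk (pullback.fst q s) :=
      Subobject.le_mk_of_comm u (by simp [hu, pullback.lift_fst, pullback.lift_snd, pullback.lift_fst_assoc, pullback.lift_snd_assoc])
    have hkey : Subobject.ofLE _ _ hle ≫ (Subobject.underlyingIso (pullback.fst q s)).hom = u := by
      rw [← cancel_mono (pullback.fst q s)]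
      simp [hu, pullback.lift_fst, pullback.lift_snd, pullback.lift_fst_assoc, pullback.lift_snd_assoc]
    have hug : u ≫ (pushout.inr m.g u ≫ r) = m.g := by
      rw [← Category.assoc]
      show (u ≫ pushout.inr m.g u) ≫ r = m.g
      rw [← pushout.condition, Category.assoc, hr, Category.comp_id]
    have hcompat : Subobject.ofLE _ _ hle ≫
        ((Subobject.underlyingIso (pullback.fst q s)).hom ≫ pushout.inr m.g u ≫ r) = m.g := by
      rw [← Category.assoc, hkey, hug]
    set a : Statement15Aux.PExt G i f :=
      { Z := Subobject.mk (pullback.fst q s)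
        g := (Subobject.underlyingIso (pullback.fst q s)).hom ≫ pushout.inr m.g u ≫ r
        le := m.le.trans hle
        comm := by
          have h1 : Subobject.ofMkLE i (Subobject.mk (pullback.fst q s)) (m.le.trans hle) =
              Subobject.ofMkLE i m.Z m.le ≫ Subobject.ofLE _ _ hle := by
            rw [Subobject.ofMkLE_comp_ofLE]
          rw [h1, Category.assoc, hcompat, m.comm] } with ha
    have hma : m ≤ a := ⟨hle, hcompat⟩
    obtain ⟨hba, -⟩ := hm hma
    -- maximality gives a contradiction: S would be zero
    have hw0 : ((Subobject.underlyingIso (pullback.fst q s)).inv ≫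
        Subobject.ofLE _ _ hba) ≫ m.Z.arrow = pullback.fst q s := by
      simp
    have hwu : ((Subobject.underlyingIso (pullback.fst q s)).inv ≫
        Subobject.ofLE _ _ hba) ≫ u = 𝟙 E := by
      rw [← cancel_mono (pullback.fst q s)]
      have : u ≫ pullback.fst q s = m.Z.arrow := by simp [hu, pullback.lift_fst, pullback.lift_snd, pullback.lift_fst_assoc, pullback.lift_snd_assoc]
      rw [Category.assoc, this, hw0, Category.id_comp]
    have hsnd : pullback.snd q s = 0 := by
      calc pullback.snd q s
          = (((Subobject.underlyingIso (pullback.fst q s)).inv ≫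
              Subobject.ofLE _ _ hba) ≫ u) ≫ pullback.snd q s := by rw [hwu, Category.id_comp]
        _ = 0 := by rw [Category.assoc, w1, comp_zero]
    have hepi0 : Epi (0 : E ⟶ S) := hsnd ▸ (inferInstance : Epi (pullback.snd q s))
    apply hS.not_isZero
    rw [IsZero.iff_id_eq_zero]
    exact (cancel_epi (0 : E ⟶ S)).1 (by simp)
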